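/- Let κ be a regular cardinal with cf(κ) > ω. Then the property of a binary relation R ⊆ κ × κ being a well-ordering of κ is κ-Borel: the set of η ∈ κ^κ coding (via a fixed pairing) a relation R_η ⊆ κ × κ such that R_η is a well-order of κ is a κ-Borel subset of κ^κ. -/

import Mathlib

open Cardinal Set

universe u v w

namespace GDST

variable {K : Type u} {A : Type v}

/-- The set `N_η` determined by the partial function with domain `Y` and values given by `η`. -/
def nbhd (Y : Set K) (η : K → A) : Set (K → A) := {ζ | ∀ i ∈ Y, ζ i = η i}

/-- Basic κ-open subsets of `K → K`: sets `N_η` where `η` is a partial function with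
domain of size `< #K`, together with the empty set. -/
def IsBasicOpen (S : Set (K → A)) : Prop :=
  (∃ (Y : Set K) (η : K → A), #Y < #K ∧ S = nbhd Y η) ∨ S = ∅

/-- Open in the topology generated by the basic κ-open sets. -/
def IsOpenStd (U : Set (K → A)) : Prop :=
  ∀ ζ ∈ U, ∃ S : Set (K → A), IsBasicOpen S ∧ ζ ∈ S ∧ S ⊆ U

/-- A union of at most `μ` basic κ-open sets; `(κ,μ)`-open. -/
def IsMuOpen (μ : Cardinal.{u}) (U : Set (K → A)) : Prop :=
  ∃ (ι : Type u) (f : ι → Set (K → A)), #ι ≤ μ ∧ (∀ i, IsBasicOpen (f i)) ∧ U = ⋃ i, f i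

/-- `(κ,μ)`-closed: the complement is `(κ,μ)`-open. -/
def IsMuClosed (μ : Cardinal.{u}) (C : Set (K → A)) : Prop := IsMuOpen μ Cᶜ

/-- The `(κ,μ)`-Borel sets: the smallest class containing the basic κ-open sets and closed
under complements and unions and intersections of length at most `μ`. -/
inductive MuBorel (μ : Cardinal.{u}) : Set (K → A) → Prop
  | basic (S : Set (K → A)) : IsBasicOpen S → MuBorel μ S
  | compl (S : Set (K → A)) : MuBorel μ S → MuBorel μ Sᶜ
  | iUnion (ι : Type u) (f : ι → Set (K → A)) : #ι ≤ μ → (∀ i, MuBorel μ (f i)) →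
      MuBorel μ (⋃ i, f i)
  | iInter (ι : Type u) (f : ι → Set (K → A)) : #ι ≤ μ → (∀ i, MuBorel μ (f i)) →
      MuBorel μ (⋂ i, f i)

/-- κ-open: a union of at most `κ = #K` basic κ-open sets. -/
def IsKOpen (U : Set (K → A)) : Prop := IsMuOpen #K U

/-- κ-closed. -/
def IsKClosed (C : Set (K → A)) : Prop := IsMuClosed #K C

/-- κ-Borel. -/
def KBorel (S : Set (K → A)) : Prop := MuBorel #K S

/- Product space versions, for subsets of `(K → A) × (K → B)`. -/
section Prod

variable {B : Type w}

/-- Basic κ-open subsets of the product: products of basic κ-open sets. -/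
def IsBasicOpen2 (S : Set ((K → A) × (K → B))) : Prop :=
  ∃ (S₁ : Set (K → A)) (S₂ : Set (K → B)), IsBasicOpen S₁ ∧ IsBasicOpen S₂ ∧ S = S₁ ×ˢ S₂

def IsOpenStd2 (U : Set ((K → A) × (K → B))) : Prop :=
  ∀ p ∈ U, ∃ S, IsBasicOpen2 S ∧ p ∈ S ∧ S ⊆ U

def IsMuOpen2 (μ : Cardinal.{u}) (U : Set ((K → A) × (K → B))) : Prop :=
  ∃ (ι : Type u) (f : ι → Set ((K → A) × (K → B))),
    #ι ≤ μ ∧ (∀ i, IsBasicOpen2 (f i)) ∧ U = ⋃ i, f i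

def IsMuClosed2 (μ : Cardinal.{u}) (C : Set ((K → A) × (K → B))) : Prop := IsMuOpen2 μ Cᶜ

inductive MuBorel2 (μ : Cardinal.{u}) : Set ((K → A) × (K → B)) → Prop
  | basic (S : Set ((K → A) × (K → B))) : IsBasicOpen2 S → MuBorel2 μ S
  | compl (S : Set ((K → A) × (K → B))) : MuBorel2 μ S → MuBorel2 μ Sᶜ
  | iUnion (ι : Type u) (f : ι → Set ((K → A) × (K → B))) : #ι ≤ μ → (∀ i, MuBorel2 μ (f i)) →
      MuBorel2 μ (⋃ i, f i)
  | iInter (ι : Type u) (f : ι → Set ((K → A) × (K → B))) : #ι ≤ μ → (∀ i, MuBorel2 μ (f i)) →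
      MuBorel2 μ (⋂ i, f i)

def IsKOpen2 (U : Set ((K → A) × (K → B))) : Prop := IsMuOpen2 #K U

def IsKClosed2 (C : Set ((K → A) × (K → B))) : Prop := IsMuClosed2 #K C

def KBorel2 (S : Set ((K → A) × (K → B))) : Prop := MuBorel2 #K S

/-- κ-Σ¹₁ : projections of κ-Borel subsets of the product. -/
def KSigma11 (S : Set (K → A)) : Prop :=
  ∃ C : Set ((K → A) × (K → A)), KBorel2 C ∧ S = Prod.fst '' C

end Prod

end GDST

namespace GDST

open Ordinal Classical

section Helpers
variable {K : Type u} [LinearOrder K]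

lemma muBorel_empty {μ : Cardinal.{u}} : MuBorel μ (∅ : Set (K → K)) :=
  .basic _ (Or.inr rfl)

lemma muBorel_univ {μ : Cardinal.{u}} : MuBorel μ (univ : Set (K → K)) := by
  have h := (muBorel_empty (K := K) (μ := μ)).compl
  simpa using h

lemma muBorel_union {μ : Cardinal.{u}} (hμ : ℵ₀ ≤ μ) {S T : Set (K → K)}
    (hS : MuBorel μ S) (hT : MuBorel μ T) : MuBorel μ (S ∪ T) := by
  have he : S ∪ T = ⋃ i : ULift.{u} Bool, cond i.down S T := by
    ext x
    simp only [mem_iUnion, mem_union]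
    constructor
    · rintro (h | h)
      exacts [⟨⟨true⟩, h⟩, ⟨⟨false⟩, h⟩]
    · rintro ⟨⟨i⟩, h⟩
      cases i
      exacts [Or.inr h, Or.inl h]
  rw [he]
  exact .iUnion _ _ (le_trans mk_le_aleph0 hμ) (fun i => by cases i.down <;> simpa)

lemma muBorel_inter {μ : Cardinal.{u}} (hμ : ℵ₀ ≤ μ) {S T : Set (K → K)}
    (hS : MuBorel μ S) (hT : MuBorel μ T) : MuBorel μ (S ∩ T) := by
  have he : S ∩ T = ⋂ i : ULift.{u} Bool, cond i.down S T := by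
    ext x
    simp only [mem_iInter, mem_inter_iff]
    constructor
    · rintro ⟨h1, h2⟩ ⟨i⟩
      cases i
      exacts [h2, h1]
    · intro h
      exact ⟨h ⟨true⟩, h ⟨false⟩⟩
  rw [he]
  exact .iInter _ _ (le_trans mk_le_aleph0 hμ) (fun i => by cases i.down <;> simpa)

/-- The set of `η` whose value at coordinate `c` is strictly above `z` is κ-Borel. -/
lemma muBorel_coord (hκ : ℵ₀ ≤ #K) (c z : K) :
    MuBorel #K {η : K → K | z < η c} := by
  classical
  have he : {η : K → K | z < η c} =
      ⋃ v : K, if z < v then nbhd {c} (fun _ => v) else ∅ := by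
    ext η
    simp only [mem_iUnion, mem_setOf_eq]
    constructor
    · intro h
      refine ⟨η c, ?_⟩
      rw [if_pos h]
      intro i hi
      simp only [mem_singleton_iff] at hi
      rw [hi]
    · rintro ⟨v, hv⟩
      by_cases h : z < v
      · rw [if_pos h] at hv
        have := hv c rfl
        rwa [this]
      · rw [if_neg h] at hv
        exact hv.elim
  rw [he]
  refine .iUnion _ _ le_rfl fun v => .basic _ ?_
  by_cases h : z < v
  · rw [if_pos h]
    refine Or.inl ⟨{c}, fun _ => v, ?_, rfl⟩
    rw [mk_singleton]
    exact lt_of_lt_of_le one_lt_aleph0 hκ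
  · rw [if_neg h]
    exact Or.inr rfl

section ChainSet

variable (π : K × K ≃ K) (z : K) (w : K → K → Prop) (hw : WellFounded w)

/-- `chainSet π z w hw a b x` is the set of `η` such that `x` has rank at most
(the `w`-rank of `b`) in the relation coded by `η` restricted to `{y | w y a}`. -/
noncomputable def chainSet (a : K) : K → K → Set (K → K) :=
  hw.fix (C := fun _ => K → Set (K → K)) (fun b rec x => ⋂ y : K,
    (if w y a then {η : K → K | z < η (π (y, x))} else ∅)ᶜ ∪
    ⋃ b' : K, if h : w b' b then rec b' h y else ∅)

lemma chainSet_def (a b x : K) : chainSet π z w hw a b x = ⋂ y : K,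
    (if w y a then {η : K → K | z < η (π (y, x))} else ∅)ᶜ ∪
    ⋃ b' : K, if _ : w b' b then chainSet π z w hw a b' y else ∅ := by
  have h := hw.fix_eq (C := fun _ => K → Set (K → K)) (fun b rec x => ⋂ y : K,
    (if w y a then {η : K → K | z < η (π (y, x))} else ∅)ᶜ ∪
    ⋃ b' : K, if h : w b' b then rec b' h y else ∅) b
  exact congrFun h x

lemma mem_chainSet {a b x : K} {η : K → K} :
    η ∈ chainSet π z w hw a b x ↔
      ∀ y : K, w y a → z < η (π (y, x)) →
        ∃ b', w b' b ∧ η ∈ chainSet π z w hw a b' y := by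
  rw [chainSet_def]
  simp only [mem_iInter, mem_union, mem_compl_iff, mem_iUnion]
  constructor
  · intro h y hya hr
    rcases h y with h' | ⟨b', hb'⟩
    · rw [if_pos hya] at h'
      exact absurd hr h'
    · by_cases hb : w b' b
      · rw [dif_pos hb] at hb'
        exact ⟨b', hb, hb'⟩
      · rw [dif_neg hb] at hb'
        exact hb'.elim
  · intro h y
    by_cases hya : w y a
    · by_cases hr : z < η (π (y, x))
      · rcases h y hya hr with ⟨b', hb, hb'⟩
        exact Or.inr ⟨b', by rw [dif_pos hb]; exact hb'⟩
      · exact Or.inl (by rw [if_pos hya]; exact hr)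
    · exact Or.inl (by rw [if_neg hya]; exact notMem_empty η)

lemma muBorel_chainSet (hκ : ℵ₀ ≤ #K) (a b x : K) :
    MuBorel #K (chainSet π z w hw a b x) := by
  induction b using hw.induction generalizing x with
  | _ b IH =>
    rw [chainSet_def]
    refine .iInter _ _ le_rfl fun y => muBorel_union hκ (.compl _ ?_) ?_
    · by_cases hya : w y a
      · rw [if_pos hya]; exact muBorel_coord hκ _ _
      · rw [if_neg hya]; exact muBorel_empty
    · refine .iUnion _ _ le_rfl fun b' => ?_
      by_cases hb : w b' b
      · rw [dif_pos hb]; exact IH b' hb y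
      · rw [dif_neg hb]; exact muBorel_empty

/-- Membership in a `chainSet` rules out descending chains starting at `x` inside `{y | w y a}`. -/
lemma chainSet_no_chain {a b x : K} {η : K → K} (hη : η ∈ chainSet π z w hw a b x) :
    ¬ ∃ f : ℕ → K, f 0 = x ∧ (∀ n, w (f n) a) ∧ ∀ n, z < η (π (f (n + 1), f n)) := by
  induction b using hw.induction generalizing x with
  | _ b IH =>
    rintro ⟨f, hf0, hfa, hfc⟩
    have h1 : z < η (π (f 1, x)) := by rw [← hf0]; exact hfc 0
    obtain ⟨b', hb', hb'mem⟩ := (mem_chainSet π z w hw).1 hη (f 1) (hfa 1) h1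
    exact IH b' hb' hb'mem ⟨fun n => f (n + 1), rfl, fun n => hfa (n + 1), fun n => hfc (n + 1)⟩

end ChainSet

lemma exists_descending_of_not_wf {α : Type*} {r : α → α → Prop} (h : ¬ WellFounded r) :
    ∃ f : ℕ → α, ∀ n, r (f (n + 1)) (f n) := by
  classical
  have ⟨x, hx⟩ : ∃ x, ¬ Acc r x := by
    by_contra hc
    push_neg at hc
    exact h ⟨hc⟩
  have step : ∀ p : {a : α // ¬ Acc r a}, ∃ q : {a : α // ¬ Acc r a}, r q.1 p.1 := by
    rintro ⟨p, hp⟩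
    obtain ⟨q, hq, hrq⟩ := exists_not_acc_lt_of_not_acc hp
    exact ⟨⟨q, hq⟩, hrq⟩
  choose g hg using step
  refine ⟨fun n => (g^[n] ⟨x, hx⟩).1, fun n => ?_⟩
  have h' : g^[n + 1] ⟨x, hx⟩ = g (g^[n] ⟨x, hx⟩) := Function.iterate_succ_apply' g n _
  simp only [h']
  exact hg _

end Helpers

/-- Let κ be a regular cardinal with cf(κ) > ω. Then the set of η ∈ κ^κ
coding (via a fixed pairing π, with η(π(a,b)) > 0 meaning a R b) a relation that is a
well-ordering of κ is a κ-Borel subset of κ^κ. -/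
theorem statement9 (K : Type u) [LinearOrder K]
    (hreg : (#K).IsRegular) (hcof : ℵ₀ < (#K).ord.cof)
    (π : K × K ≃ K) (z : K) (hz : ∀ x : K, z ≤ x) :
    KBorel {η : K → K | IsWellOrder K (fun a b => z < η (π (a, b)))} := by
  classical
  obtain ⟨w, wo, hw⟩ := Cardinal.ord_eq K
  have hκ : ℵ₀ ≤ #K := hreg.aleph0_le
  have hcof' : (type w).cof = #K := by rw [← hw]; exact hreg.cof_eq
  have hlim : Order.IsSuccLimit (type w) := by rw [← hw]; exact Cardinal.isSuccLimit_ord hκ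
  have hKne : Nonempty K := ⟨z⟩
  -- the three component sets
  set R : (K → K) → K → K → Prop := fun η a b => z < η (π (a, b)) with hR
  set T : Set (K → K) := ⋂ p : K × K,
    ({η | z < η (π (p.1, p.2))} ∪ ((if p.1 = p.2 then univ else ∅) ∪ {η | z < η (π (p.2, p.1))}))
    with hT
  set Tr : Set (K → K) := ⋂ p : K × K × K,
    (({η | z < η (π (p.1, p.2.1))} ∩ {η | z < η (π (p.2.1, p.2.2))})ᶜ ∪
      {η | z < η (π (p.1, p.2.2))}) with hTr
  set W : Set (K → K) := ⋂ a : K, ⋂ x : K,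
    (if w x a then ⋃ b : K, chainSet π z w wo.wf a b x else univ) with hW
  -- bounding countable families
  have bound : ∀ f : ℕ → K, ∃ a : K, ∀ n, w (f n) a := by
    intro f
    have hsup : (⨆ n : ℕ, typein w (f n)) < type w := by
      refine iSup_lt_ord_lift ?_ fun n => typein_lt_type w (f n)
      rw [hcof', Cardinal.mk_nat, Cardinal.lift_aleph0]
      exact hcof.trans_le hreg.cof_eq.le
    have hsup1 : (⨆ n : ℕ, typein w (f n)) + 1 < type w := hlim.succ_lt hsup
    obtain ⟨a, ha⟩ := typein_surj w hsup1
    refine ⟨a, fun n => ?_⟩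
    rw [← typein_lt_typein w, ha]
    exact lt_of_le_of_lt (Ordinal.le_iSup (fun n : ℕ => typein w (f n)) n)
      (Order.lt_succ _)
  -- from well-foundedness to membership in chain sets
  have toChain : ∀ (η : K → K), WellFounded (R η) → ∀ a x, w x a →
      ∃ b, η ∈ chainSet π z w wo.wf a b x := by
    intro η hwf a
    intro x
    induction x using hwf.induction with
    | _ x IH =>
      intro hxa
      set S := {y : K // w y a} with hS
      have hScard : #S < #K := by
        have h1 : typein w a < (#K).ord := by rw [hw]; exact typein_lt_type w a
        have h2 := Cardinal.lt_ord.1 h1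
        exact h2
      have g : ∀ y : S, ∃ b : K, R η y.1 x → η ∈ chainSet π z w wo.wf a b y.1 := by
        rintro ⟨y, hya⟩
        by_cases hr : R η y x
        · obtain ⟨b, hb⟩ := IH y hr hya
          exact ⟨b, fun _ => hb⟩
        · exact ⟨Classical.arbitrary K, fun h => absurd h hr⟩
      choose g hg using g
      have hsup : (⨆ y : S, typein w (g y)) < type w := by
        refine iSup_lt_ord_lift ?_ fun y => typein_lt_type w (g y)
        rw [hcof', Cardinal.lift_id]
        exact hScard
      have hsup1 : (⨆ y : S, typein w (g y)) + 1 < type w := hlim.succ_lt hsup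
      obtain ⟨b, hb⟩ := typein_surj w hsup1
      refine ⟨b, (mem_chainSet π z w wo.wf).2 fun y hya hr => ?_⟩
      refine ⟨g ⟨y, hya⟩, ?_, hg ⟨y, hya⟩ hr⟩
      rw [← typein_lt_typein w, hb]
      exact lt_of_le_of_lt (Ordinal.le_iSup (fun y : S => typein w (g y)) ⟨y, hya⟩)
        (Order.lt_succ _)
  -- the set identity
  have key : {η : K → K | IsWellOrder K (fun a b => z < η (π (a, b)))} = T ∩ (Tr ∩ W) := by
    ext η
    simp only [mem_setOf_eq, mem_inter_iff]
    constructor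
    · intro h
      refine ⟨?_, ?_, ?_⟩
      · rw [hT]
        simp only [mem_iInter]
        rintro ⟨x, y⟩
        rcases @trichotomous_of K _ h.toTrichotomous x y with h1 | h1 | h1
        · exact Or.inl h1
        · exact Or.inr (Or.inl (by rw [if_pos h1]; trivial))
        · exact Or.inr (Or.inr h1)
      · rw [hTr]
        simp only [mem_iInter, mem_union, mem_compl_iff, mem_inter_iff, mem_setOf_eq]
        rintro ⟨x, y, u⟩
        by_cases h1 : z < η (π (x, y)) ∧ z < η (π (y, u))
        · exact Or.inr (haveI := h; trans_of (fun a b => z < η (π (a, b))) h1.1 h1.2)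
        · exact Or.inl h1
      · rw [hW]
        simp only [mem_iInter]
        intro a x
        by_cases hxa : w x a
        · rw [if_pos hxa]
          have hwf : WellFounded (R η) := h.toIsWellFounded.wf
          obtain ⟨b, hb⟩ := toChain η hwf a x hxa
          exact mem_iUnion.2 ⟨b, hb⟩
        · rw [if_neg hxa]; trivial
    · rintro ⟨h1, h2, h3⟩
      rw [hT] at h1
      rw [hTr] at h2
      rw [hW] at h3
      simp only [mem_iInter] at h1 h2 h3
      have htri : IsTrichotomous K (R η) := by
        refine Std.trichotomous_of_rel_or_eq_or_rel_swap ?_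
        intro x y
        rcases h1 (x, y) with h' | h' | h'
        · exact Or.inl h'
        · by_cases hxy : x = y
          · exact Or.inr (Or.inl hxy)
          · rw [if_neg hxy] at h'; exact h'.elim
        · exact Or.inr (Or.inr h')
      have htr : IsTrans K (R η) := by
        constructor
        intro x y u hxy hyu
        rcases h2 (x, y, u) with h' | h'
        · exact absurd ⟨hxy, hyu⟩ h'
        · exact h'
      have hwf : IsWellFounded K (R η) := by
        constructor
        by_contra hnwf
        obtain ⟨f, hf⟩ := exists_descending_of_not_wf hnwf
        obtain ⟨a, ha⟩ := bound f
        have hx := h3 a (f 0)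
        rw [if_pos (ha 0)] at hx
        obtain ⟨b, hb⟩ := mem_iUnion.1 hx
        exact chainSet_no_chain π z w wo.wf hb ⟨f, rfl, ha, hf⟩
      exact @IsWellOrder.mk K (R η) hwf htri
  rw [key]
  have hKK : #(K × K) ≤ #K := by
    rw [Cardinal.mk_prod, Cardinal.lift_id, Cardinal.mul_eq_self hκ]
  have hKKK : #(K × K × K) ≤ #K := by
    rw [Cardinal.mk_prod, Cardinal.lift_id, Cardinal.lift_id]
    calc #K * #(K × K) ≤ #K * #K := mul_le_mul_right hKK _
    _ = #K := Cardinal.mul_eq_self hκ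
  refine muBorel_inter hκ ?_ (muBorel_inter hκ ?_ ?_)
  · refine .iInter _ _ hKK fun p => muBorel_union hκ (muBorel_coord hκ _ _)
      (muBorel_union hκ ?_ (muBorel_coord hκ _ _))
    by_cases h : p.1 = p.2
    · rw [if_pos h]; exact muBorel_univ
    · rw [if_neg h]; exact muBorel_empty
  · exact .iInter _ _ hKKK fun p => muBorel_union hκ
      (.compl _ (muBorel_inter hκ (muBorel_coord hκ _ _) (muBorel_coord hκ _ _)))
      (muBorel_coord hκ _ _)
  · refine .iInter _ _ le_rfl fun a => .iInter _ _ le_rfl fun x => ?_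
    by_cases hxa : w x a
    · rw [if_pos hxa]
      exact .iUnion _ _ le_rfl fun b => muBorel_chainSet π z w wo.wf hκ a b x
    · rw [if_neg hxa]
      exact muBorel_univ


end GDST
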